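/- For 0 < q < 1/2 and p = 1 - q, we have p·h(q²) > q·h(p²), where h is the binary entropy function. -/

import Mathlib

noncomputable def binH (x : ℝ) : ℝ := -x * Real.log x - (1 - x) * Real.log (1 - x)

noncomputable def auxG (z : ℝ) : ℝ :=
  (1 + z) * Real.log (1 + z) + (1 - z) * Real.log (1 - z)

noncomputable def auxW (z : ℝ) : ℝ :=
  z * (Real.log (1 + z) - Real.log (1 - z)) - 2 * auxG z

noncomputable def auxw1 (z : ℝ) : ℝ :=
  2 * z / (1 - z ^ 2) - (Real.log (1 + z) - Real.log (1 - z))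

noncomputable def auxH (z : ℝ) : ℝ := auxG z / z ^ 2

lemma hasDerivAt_log1p {z : ℝ} (h : -1 < z) :
    HasDerivAt (fun z : ℝ => Real.log (1 + z)) (1 / (1 + z)) z := by
  have h0 : (1 : ℝ) + z ≠ 0 := by linarith
  have := (Real.hasDerivAt_log h0).comp z ((hasDerivAt_id z).const_add 1)
  refine this.congr_deriv ?_
  simp [one_div]

lemma hasDerivAt_log1m {z : ℝ} (h : z < 1) :
    HasDerivAt (fun z : ℝ => Real.log (1 - z)) (-(1 / (1 - z))) z := by
  have h0 : (1 : ℝ) - z ≠ 0 := by linarith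
  have := (Real.hasDerivAt_log h0).comp z ((hasDerivAt_id z).const_sub 1)
  refine this.congr_deriv ?_
  simp [one_div]

lemma hasDerivAt_auxG {z : ℝ} (h1 : -1 < z) (h2 : z < 1) :
    HasDerivAt auxG (Real.log (1 + z) - Real.log (1 - z)) z := by
  have h0 : (1 : ℝ) + z ≠ 0 := by linarith
  have h0' : (1 : ℝ) - z ≠ 0 := by linarith
  have hA := (((hasDerivAt_id z).const_add 1).mul (hasDerivAt_log1p h1))
  have hB := (((hasDerivAt_id z).const_sub 1).mul (hasDerivAt_log1m h2))
  have := hA.add hB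
  refine this.congr_deriv ?_
  simp only [id]
  field_simp
  ring

lemma hasDerivAt_auxW {z : ℝ} (h1 : -1 < z) (h2 : z < 1) :
    HasDerivAt auxW (auxw1 z) z := by
  have h0 : (1 : ℝ) + z ≠ 0 := by linarith
  have h0' : (1 : ℝ) - z ≠ 0 := by linarith
  have hL : HasDerivAt (fun z : ℝ => Real.log (1 + z) - Real.log (1 - z))
      (1 / (1 + z) + 1 / (1 - z)) z := by
    have := (hasDerivAt_log1p h1).sub (hasDerivAt_log1m h2)
    refine this.congr_deriv ?_; ring
  have := ((hasDerivAt_id z).mul hL).sub ((hasDerivAt_auxG h1 h2).const_mul 2)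
  refine this.congr_deriv ?_
  simp only [id]
  unfold auxw1
  have hz2 : (1 : ℝ) - z ^ 2 ≠ 0 := by
    intro h; apply h0; nlinarith
  field_simp
  ring

lemma hasDerivAt_auxw1 {z : ℝ} (h1 : -1 < z) (h2 : z < 1) :
    HasDerivAt auxw1 (4 * z ^ 2 / (1 - z ^ 2) ^ 2) z := by
  have h0 : (1 : ℝ) + z ≠ 0 := by linarith
  have h0' : (1 : ℝ) - z ≠ 0 := by linarith
  have hz2 : (1 : ℝ) - z ^ 2 ≠ 0 := by intro h; apply h0; nlinarith
  have hden : HasDerivAt (fun z : ℝ => 1 - z ^ 2) (-(2 * z)) z := by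
    have := ((hasDerivAt_pow 2 z)).const_sub 1
    refine this.congr_deriv ?_; simp
  have hdiv := ((hasDerivAt_id z).const_mul 2).div hden hz2
  have := hdiv.sub ((hasDerivAt_log1p h1).sub (hasDerivAt_log1m h2))
  refine this.congr_deriv ?_
  simp only [id]
  field_simp
  ring

lemma auxw1_pos {z : ℝ} (h1 : 0 < z) (h2 : z < 1) : 0 < auxw1 z := by
  have hmono : StrictMonoOn auxw1 (Set.Ico 0 1) := by
    apply strictMonoOn_of_deriv_pos (convex_Ico 0 1)
    · intro x hx
      exact (hasDerivAt_auxw1 (by linarith [hx.1]) hx.2).continuousAt.continuousWithinAt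
    · intro x hx
      rw [interior_Ico] at hx
      rw [(hasDerivAt_auxw1 (by linarith [hx.1]) hx.2).deriv]
      have hx0 : 0 < x := hx.1
      have : (1 : ℝ) - x ^ 2 > 0 := by nlinarith [hx.1, hx.2]
      positivity
  have h0 : auxw1 0 = 0 := by simp [auxw1]
  have := hmono (Set.mem_Ico.2 ⟨le_refl 0, by norm_num⟩) (Set.mem_Ico.2 ⟨le_of_lt h1, h2⟩) h1
  rwa [h0] at this

lemma auxW_pos {z : ℝ} (h1 : 0 < z) (h2 : z < 1) : 0 < auxW z := by
  have hmono : StrictMonoOn auxW (Set.Ico 0 1) := by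
    apply strictMonoOn_of_deriv_pos (convex_Ico 0 1)
    · intro x hx
      exact (hasDerivAt_auxW (by linarith [hx.1]) hx.2).continuousAt.continuousWithinAt
    · intro x hx
      rw [interior_Ico] at hx
      rw [(hasDerivAt_auxW (by linarith [hx.1]) hx.2).deriv]
      exact auxw1_pos hx.1 hx.2
  have h0 : auxW 0 = 0 := by simp [auxW, auxG]
  have := hmono (Set.mem_Ico.2 ⟨le_refl 0, by norm_num⟩) (Set.mem_Ico.2 ⟨le_of_lt h1, h2⟩) h1
  rwa [h0] at this

lemma auxH_strictMono : StrictMonoOn auxH (Set.Ioo 0 1) := by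
  apply strictMonoOn_of_deriv_pos (convex_Ioo 0 1)
  · intro x hx
    have hx0 : x ≠ 0 := ne_of_gt hx.1
    have hder : HasDerivAt auxH
        (((Real.log (1 + x) - Real.log (1 - x)) * x ^ 2 - auxG x * (2 * x)) / (x ^ 2) ^ 2) x := by
      exact (hasDerivAt_auxG (by linarith [hx.1]) hx.2).div
        (by simpa using hasDerivAt_pow 2 x) (pow_ne_zero 2 hx0)
    exact hder.continuousAt.continuousWithinAt
  · intro x hx
    rw [isOpen_Ioo.interior_eq] at hx
    have hx0 : x ≠ 0 := ne_of_gt hx.1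
    have hder : HasDerivAt auxH
        (((Real.log (1 + x) - Real.log (1 - x)) * x ^ 2 - auxG x * (2 * x)) / (x ^ 2) ^ 2) x := by
      exact (hasDerivAt_auxG (by linarith [hx.1]) hx.2).div
        (by simpa using hasDerivAt_pow 2 x) (pow_ne_zero 2 hx0)
    rw [hder.deriv]
    have hnum : (Real.log (1 + x) - Real.log (1 - x)) * x ^ 2 - auxG x * (2 * x)
        = x * auxW x := by unfold auxW; ring
    rw [hnum]
    have hWpos := auxW_pos hx.1 hx.2
    have hx1 : 0 < x := hx.1
    positivity

theorem stmt0 (q p : ℝ) (hq : 0 < q) (hq2 : q < 1/2) (hp : p = 1 - q) :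
    p * binH (q^2) > q * binH (p^2) := by
  subst hp
  have hq1 : q < 1 := by linarith
  have hpq : q < 1 - q := by linarith
  have hp0 : 0 < 1 - q := by linarith
  have hp1 : 1 - q < 1 := by linarith
  have hkey := auxH_strictMono (Set.mem_Ioo.2 ⟨hq, hq1⟩) (Set.mem_Ioo.2 ⟨hp0, hp1⟩) hpq
  unfold auxH at hkey
  rw [div_lt_div_iff₀ (by positivity) (by positivity)] at hkey
  -- hkey : auxG q * (1-q)^2 < auxG (1-q) * q^2
  have hident : (1 - q) * binH (q ^ 2) - q * binH ((1 - q) ^ 2)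
      = auxG (1 - q) * q ^ 2 - auxG q * (1 - q) ^ 2 := by
    unfold binH auxG
    have e1 : (1 : ℝ) + (1 - q) = 2 - q := by ring
    have e2 : (1 : ℝ) - (1 - q) = q := by ring
    have e3 : (1 : ℝ) - q ^ 2 = (1 - q) * (1 + q) := by ring
    have e4 : (1 : ℝ) - (1 - q) ^ 2 = q * (2 - q) := by ring
    rw [e1, e2, e3, e4, Real.log_mul (by linarith) (by linarith),
      Real.log_mul (by linarith) (by linarith),
      show Real.log (q ^ 2) = 2 * Real.log q by
        rw [Real.log_pow]; norm_num,
      show Real.log ((1 - q) ^ 2) = 2 * Real.log (1 - q) by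
        rw [Real.log_pow]; norm_num]
    ring
  linarith
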